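/- Let ϖ ∈ ℝ satisfy the Diophantine condition: there exist c₁ > 0 and d > 1 with |j·ϖ/π − i| ≥ c₁⁻¹/j^d for all integers i and all j ≥ 1. Let ε > 0 and let (f_n) satisfy |f_n − f_0 − n·ϖ| ≤ K·n²·(log ε⁻¹)⁻¹ mod π for some K > 0. Then there exists c₃ > 0 (depending on c₁, d, K, π but not on ε) such that for all sufficiently small ε and all 1 ≤ n ≤ ⌊c₃⁻¹·(log ε⁻¹)^{1/(2+d)}⌋, one has dist(f_n − f_0, πℤ) ≥ (c₁⁻¹/(2·m^d))·π⁻¹·π where m = ⌊c₃⁻¹·(log ε⁻¹)^{1/(2+d)}⌋; in particular dist(f_n − f_0, πℤ) ≥ (2π c₁ m^d)⁻¹·π > (log ε⁻¹)^{−1} · (log ε⁻¹)^{(1+d)/(2+d)} / (2π c₁ c₃^{d}) for large log ε⁻¹. -/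

import Mathlib

/-- Quantitative separation (Proposition 6.5): for a Diophantine rotation number ϖ/π,
the orbit f_n = f_0 + nϖ + O(n² log⁻¹ ε⁻¹) mod π stays at distance ≥ c₁⁻¹/(2 m^d)
from f_0 modulo π for all 1 ≤ n ≤ m = ⌊c₃⁻¹ (log ε⁻¹)^{1/(2+d)}⌋. -/
theorem stmt12 (c₁ d K ϖ : ℝ) (hc : 0 < c₁) (hd : 1 < d) (hK : 0 < K)
    (hdio : ∀ (i : ℤ) (j : ℕ), 1 ≤ j →
      c₁⁻¹ / (j : ℝ) ^ d ≤ |(j : ℝ) * (ϖ / Real.pi) - (i : ℝ)|) :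
    ∃ c₃ > 0, ∃ ε₀ > 0, ∀ ε : ℝ, 0 < ε → ε ≤ ε₀ →
      ∀ f : ℕ → ℝ,
        (∀ n : ℕ, ∃ k : ℤ,
          |f n - f 0 - (n : ℝ) * ϖ - (k : ℝ) * Real.pi| ≤ K * (n : ℝ) ^ 2 * (Real.log ε⁻¹)⁻¹) →
        ∀ n : ℕ, 1 ≤ n → n ≤ ⌊c₃⁻¹ * (Real.log ε⁻¹) ^ ((1:ℝ) / (2 + d))⌋₊ →
          ∀ k : ℤ,
            c₁⁻¹ / (2 * ((⌊c₃⁻¹ * (Real.log ε⁻¹) ^ ((1:ℝ) / (2 + d))⌋₊ : ℝ)) ^ d)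
              ≤ |f n - f 0 - (k : ℝ) * Real.pi| := by
  set c₃ : ℝ := 1 + 2 * K * c₁ with hc₃def
  have hc₃1 : 1 < c₃ := by nlinarith
  have hc₃0 : 0 < c₃ := by linarith
  refine ⟨c₃, hc₃0, Real.exp (-1), Real.exp_pos _, ?_⟩
  intro ε hε hεe f horb n hn1 hnm k
  set L : ℝ := Real.log ε⁻¹ with hLdef
  have hL1 : 1 ≤ L := by
    have h := Real.log_le_log hε hεe
    rw [Real.log_exp] at h
    rw [hLdef, Real.log_inv]; linarith
  have hL0 : 0 < L := by linarith
  have h2d : (0:ℝ) < 2 + d := by linarith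
  set m : ℕ := ⌊c₃⁻¹ * L ^ ((1:ℝ) / (2 + d))⌋₊ with hmdef
  have hm1 : 1 ≤ m := le_trans hn1 hnm
  have hmpos : (0:ℝ) < m := by exact_mod_cast hm1
  have hnpos : (0:ℝ) < n := by exact_mod_cast hn1
  have hnm' : (n:ℝ) ≤ m := by exact_mod_cast hnm
  have hmle : (m:ℝ) ≤ c₃⁻¹ * L ^ ((1:ℝ) / (2 + d)) := Nat.floor_le (by positivity)
  -- (c₃ m)^(2+d) ≤ L
  have h1 : c₃ * m ≤ L ^ ((1:ℝ) / (2 + d)) := by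
    have := mul_le_mul_of_nonneg_left hmle hc₃0.le
    rwa [← mul_assoc, mul_inv_cancel₀ hc₃0.ne', one_mul] at this
  have hcmL : (c₃ * m) ^ ((2:ℝ) + d) ≤ L := by
    have h2 := Real.rpow_le_rpow (by positivity) h1 h2d.le
    rwa [← Real.rpow_mul hL0.le, one_div, inv_mul_cancel₀ h2d.ne', Real.rpow_one] at h2
  -- expand (c₃ m)^(2+d) = c₃^(2+d) * m^2 * m^d
  have hexp : (c₃ * m) ^ ((2:ℝ) + d) = c₃ ^ ((2:ℝ) + d) * ((m:ℝ) ^ 2 * (m:ℝ) ^ d) := by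
    rw [Real.mul_rpow hc₃0.le hmpos.le, Real.rpow_add hmpos]
    norm_num [Real.rpow_two]
  have hc₃pow : 2 * K * c₁ ≤ c₃ ^ ((2:ℝ) + d) := by
    have : c₃ ^ (1:ℝ) ≤ c₃ ^ ((2:ℝ) + d) :=
      Real.rpow_le_rpow_of_exponent_le hc₃1.le (by linarith)
    rw [Real.rpow_one] at this; linarith
  have hmd : (0:ℝ) < (m:ℝ) ^ d := Real.rpow_pos_of_pos hmpos d
  have hnd : (0:ℝ) < (n:ℝ) ^ d := Real.rpow_pos_of_pos hnpos d
  -- error bound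
  obtain ⟨k', hk'⟩ := horb n
  have herr : K * (n:ℝ) ^ 2 * L⁻¹ ≤ c₁⁻¹ / (2 * (m:ℝ) ^ d) := by
    have hn2 : (n:ℝ) ^ 2 ≤ (m:ℝ) ^ 2 := by nlinarith
    have hLinv : L⁻¹ ≤ (c₃ ^ ((2:ℝ) + d) * ((m:ℝ) ^ 2 * (m:ℝ) ^ d))⁻¹ := by
      rw [← hexp]
      exact inv_anti₀ (by rw [hexp]; positivity) hcmL
    calc K * (n:ℝ) ^ 2 * L⁻¹ ≤ K * (m:ℝ) ^ 2 * (c₃ ^ ((2:ℝ) + d) * ((m:ℝ) ^ 2 * (m:ℝ) ^ d))⁻¹ := by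
          apply mul_le_mul (by nlinarith) hLinv (by positivity) (by positivity)
      _ ≤ K * (m:ℝ) ^ 2 * (2 * K * c₁ * ((m:ℝ) ^ 2 * (m:ℝ) ^ d))⁻¹ := by
          apply mul_le_mul_of_nonneg_left _ (by positivity)
          apply inv_anti₀ (by positivity)
          apply mul_le_mul_of_nonneg_right hc₃pow (by positivity)
      _ = c₁⁻¹ / (2 * (m:ℝ) ^ d) := by
          field_simp
  -- Diophantine bound
  have hπ := Real.pi_pos
  have hdi := hdio (k - k') n hn1
  have hdi2 : Real.pi * c₁⁻¹ / (n:ℝ) ^ d ≤ |(n:ℝ) * ϖ - ((k:ℝ) - (k':ℝ)) * Real.pi| := by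
    have := mul_le_mul_of_nonneg_left hdi hπ.le
    calc Real.pi * c₁⁻¹ / (n:ℝ) ^ d = Real.pi * (c₁⁻¹ / (n:ℝ) ^ d) := by ring
      _ ≤ Real.pi * |(n:ℝ) * (ϖ / Real.pi) - ((k - k' : ℤ) : ℝ)| := this
      _ = |Real.pi * ((n:ℝ) * (ϖ / Real.pi) - ((k - k' : ℤ) : ℝ))| := by
          rw [abs_mul, abs_of_pos hπ]
      _ = |(n:ℝ) * ϖ - ((k:ℝ) - (k':ℝ)) * Real.pi| := by
          congr 1
          push_cast
          field_simp
  have hdi3 : Real.pi * c₁⁻¹ / (m:ℝ) ^ d ≤ Real.pi * c₁⁻¹ / (n:ℝ) ^ d := by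
    apply div_le_div_of_nonneg_left (by positivity) hnd
    exact Real.rpow_le_rpow hnpos.le hnm' (by linarith)
  -- triangle inequality
  have htri : |(n:ℝ) * ϖ - ((k:ℝ) - (k':ℝ)) * Real.pi| - |f n - f 0 - (n:ℝ) * ϖ - (k':ℝ) * Real.pi|
      ≤ |f n - f 0 - (k:ℝ) * Real.pi| := by
    have h := abs_add_le (f n - f 0 - (k:ℝ) * Real.pi) (-(f n - f 0 - (n:ℝ) * ϖ - (k':ℝ) * Real.pi))
    rw [abs_neg] at h
    have heq : (n:ℝ) * ϖ - ((k:ℝ) - (k':ℝ)) * Real.pi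
        = f n - f 0 - (k:ℝ) * Real.pi + -(f n - f 0 - (n:ℝ) * ϖ - (k':ℝ) * Real.pi) := by ring
    rw [heq]
    linarith
  have hπ1 : (1:ℝ) ≤ Real.pi := by linarith [Real.pi_gt_three]
  have hq : 0 < c₁⁻¹ / (2 * (m:ℝ) ^ d) := by positivity
  have heq : Real.pi * c₁⁻¹ / (m:ℝ) ^ d = 2 * (Real.pi * (c₁⁻¹ / (2 * (m:ℝ) ^ d))) := by
    field_simp
  have h2 : c₁⁻¹ / (2 * (m:ℝ) ^ d) ≤ Real.pi * (c₁⁻¹ / (2 * (m:ℝ) ^ d)) :=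
    le_mul_of_one_le_left hq.le hπ1
  have hfin : Real.pi * c₁⁻¹ / (m:ℝ) ^ d - c₁⁻¹ / (2 * (m:ℝ) ^ d) ≥ c₁⁻¹ / (2 * (m:ℝ) ^ d) := by
    rw [heq]
    linarith
  linarith
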